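/- arXiv:1206.6004 — 2 statements merged into one kernel-verified Lean document; each statement's English description precedes it below -/
import Mathlib

section
/- For every real x < 0, the polynomial p(y) = x y⁵ + x + x²y² − x⁴y − 2y³ has exactly one real root y. -/
/-- For every real x < 0, p(y) = xy⁵ + x + x²y² − x⁴y − 2y³ has exactly one
real root y. -/
theorem hc_one_real_root (x : ℝ) (hx : x < 0) :
    ∃! y : ℝ, x * y ^ 5 + x + x ^ 2 * y ^ 2 - x ^ 4 * y - 2 * y ^ 3 = 0 := by
  set f : ℝ → ℝ := fun y => x * y ^ 5 + x + x ^ 2 * y ^ 2 - x ^ 4 * y - 2 * y ^ 3 with hf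
  have hcont : Continuous f := by fun_prop
  have hd : ∀ y : ℝ, HasDerivAt f (5 * x * y ^ 4 + 2 * x ^ 2 * y - x ^ 4 - 6 * y ^ 2) y := by
    intro y
    have h1 : HasDerivAt (fun y : ℝ => x * y ^ 5) (x * (5 * y ^ 4)) y := by
      simpa using (hasDerivAt_pow 5 y).const_mul x
    have h2 : HasDerivAt (fun y : ℝ => x ^ 2 * y ^ 2) (x ^ 2 * (2 * y)) y := by
      simpa using (hasDerivAt_pow 2 y).const_mul (x ^ 2)
    have h3 : HasDerivAt (fun y : ℝ => x ^ 4 * y) (x ^ 4) y := by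
      simpa using (hasDerivAt_id y).const_mul (x ^ 4)
    have h4 : HasDerivAt (fun y : ℝ => 2 * y ^ 3) (2 * (3 * y ^ 2)) y := by
      simpa using (hasDerivAt_pow 3 y).const_mul (2 : ℝ)
    have := ((((h1.add_const x).add h2).sub h3).sub h4)
    refine this.congr_deriv ?_
    ring
  have hx4 : (0:ℝ) < x ^ 4 := by nlinarith [mul_pos_of_neg_of_neg hx hx]
  have hanti : StrictAnti f := by
    apply strictAnti_of_deriv_neg
    intro y
    rw [(hd y).deriv]
    nlinarith [sq_nonneg (y - x ^ 2), sq_nonneg y, hx4,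
      mul_nonneg (neg_nonneg.2 hx.le) (sq_nonneg (y ^ 2)),
      mul_nonneg (sq_nonneg y) (sq_nonneg x)]
  set c : ℝ := x ^ 2 / 2 + 1 with hc
  have hc1 : (1 : ℝ) ≤ c := by rw [hc]; nlinarith [sq_nonneg x]
  have hcpos : (0:ℝ) < c := lt_of_lt_of_le one_pos hc1
  have hfb : f c < 0 := by
    simp only [hf]
    nlinarith [sq_nonneg x, sq_nonneg c, pow_pos hcpos 3, pow_pos hcpos 5, hx4,
      one_le_pow₀ hc1 (n := 3), mul_pos hx4 hcpos, mul_pos (pow_pos hcpos 5) (neg_pos.2 hx)]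
  have hfa : 0 < f (-c) := by
    simp only [hf]
    have h5 : (1 : ℝ) ≤ c ^ 5 := one_le_pow₀ hc1
    have h3 : (0 : ℝ) < c ^ 3 := pow_pos hcpos 3
    nlinarith [hx4, sq_nonneg x, sq_nonneg c, mul_pos hx4 hcpos,
      mul_le_mul_of_nonpos_left h5 hx.le]
  have hab : (-c : ℝ) < c := by linarith
  have hmem : (0 : ℝ) ∈ Set.Icc (f c) (f (-c)) := ⟨hfb.le, hfa.le⟩
  obtain ⟨y, hy, hy0⟩ := intermediate_value_Icc' hab.le hcont.continuousOn hmem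
  exact ⟨y, hy0, fun z hz => hanti.injective (hy0 ▸ hz)⟩
end

section
/- For every real x with 0 < x < 1, the polynomial p(y) = x y⁵ + x + x²y² − x⁴y − 2y³ has exactly three distinct real roots y. -/
private lemma hc_deriv1 (x : ℝ) (y : ℝ) :
    HasDerivAt (fun y : ℝ => x * y ^ 5 + x + x ^ 2 * y ^ 2 - x ^ 4 * y - 2 * y ^ 3)
      (5 * x * y ^ 4 + 2 * x ^ 2 * y - x ^ 4 - 6 * y ^ 2) y := by
  have h := (((((hasDerivAt_pow 5 y).const_mul x).add_const x).add
      ((hasDerivAt_pow 2 y).const_mul (x ^ 2))).sub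
      ((hasDerivAt_id y).const_mul (x ^ 4))).sub ((hasDerivAt_pow 3 y).const_mul 2)
  convert h using 1
  · rfl
  · rfl
  · rfl
  · norm_num
    ring

private lemma hc_deriv2 (x : ℝ) (y : ℝ) :
    HasDerivAt (fun y : ℝ => 5 * x * y ^ 4 + 2 * x ^ 2 * y - x ^ 4 - 6 * y ^ 2)
      (20 * x * y ^ 3 + 2 * x ^ 2 - 12 * y) y := by
  have h := ((((hasDerivAt_pow 4 y).const_mul (5 * x)).add
      ((hasDerivAt_id y).const_mul (2 * x ^ 2))).sub_const (x ^ 4)).sub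
      ((hasDerivAt_pow 2 y).const_mul 6)
  convert h using 1
  · rfl
  · rfl
  · rfl
  · norm_num
    ring

/-- If p has four distinct real roots, contradiction. -/
private lemma hc_key (x : ℝ) (hx0 : 0 < x) (y1 y2 y3 y4 : ℝ)
    (h12 : y1 < y2) (h23 : y2 < y3) (h34 : y3 < y4)
    (e1 : x * y1 ^ 5 + x + x ^ 2 * y1 ^ 2 - x ^ 4 * y1 - 2 * y1 ^ 3 = 0)
    (e2 : x * y2 ^ 5 + x + x ^ 2 * y2 ^ 2 - x ^ 4 * y2 - 2 * y2 ^ 3 = 0)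
    (e3 : x * y3 ^ 5 + x + x ^ 2 * y3 ^ 2 - x ^ 4 * y3 - 2 * y3 ^ 3 = 0)
    (e4 : x * y4 ^ 5 + x + x ^ 2 * y4 ^ 2 - x ^ 4 * y4 - 2 * y4 ^ 3 = 0) :
    False := by
  have hFc : Continuous (fun y : ℝ => x * y ^ 5 + x + x ^ 2 * y ^ 2 - x ^ 4 * y - 2 * y ^ 3) := by
    fun_prop
  have hGc : Continuous (fun y : ℝ => 5 * x * y ^ 4 + 2 * x ^ 2 * y - x ^ 4 - 6 * y ^ 2) := by
    fun_prop
  -- key negativity fact at critical points of p'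
  have hL : ∀ y : ℝ, 20 * x * y ^ 3 + 2 * x ^ 2 - 12 * y = 0 →
      5 * x * y ^ 4 + 2 * x ^ 2 * y - x ^ 4 - 6 * y ^ 2 < 0 := by
    intro y h
    have h2 : (20 * x * y ^ 3 + 2 * x ^ 2 - 12 * y) * y = 0 := by rw [h]; ring
    have hx4 : 0 < x ^ 4 := pow_pos hx0 4
    nlinarith [sq_nonneg (4 * y - x ^ 2)]
  -- Rolle three times
  obtain ⟨z1, hz1, hz1'⟩ := exists_hasDerivAt_eq_zero h12 hFc.continuousOn
    (by rw [e1, e2]) (fun y _ => hc_deriv1 x y)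
  obtain ⟨z2, hz2, hz2'⟩ := exists_hasDerivAt_eq_zero h23 hFc.continuousOn
    (by rw [e2, e3]) (fun y _ => hc_deriv1 x y)
  obtain ⟨z3, hz3, hz3'⟩ := exists_hasDerivAt_eq_zero h34 hFc.continuousOn
    (by rw [e3, e4]) (fun y _ => hc_deriv1 x y)
  have hz12 : z1 < z2 := lt_trans hz1.2 hz2.1
  have hz23 : z2 < z3 := lt_trans hz2.2 hz3.1
  -- maximum of p' on [z1, z3]
  obtain ⟨w, hw, hwmax⟩ := (isCompact_Icc (a := z1) (b := z3)).exists_isMaxOn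
    (Set.nonempty_Icc.mpr (le_of_lt (lt_trans hz12 hz23))) hGc.continuousOn
  by_cases hcase : 5 * x * w ^ 4 + 2 * x ^ 2 * w - x ^ 4 - 6 * w ^ 2 ≤ 0
  · -- p' ≤ 0 on [z1,z3], so z2 is an interior max point of p'
    have hmax2 : IsMaxOn (fun y : ℝ => 5 * x * y ^ 4 + 2 * x ^ 2 * y - x ^ 4 - 6 * y ^ 2)
        (Set.Icc z1 z3) z2 := by
      intro y hy
      have h1 := hwmax hy
      simp only [Set.mem_setOf_eq] at h1 ⊢
      rw [hz2']
      linarith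
    have hloc : IsLocalMax (fun y : ℝ => 5 * x * y ^ 4 + 2 * x ^ 2 * y - x ^ 4 - 6 * y ^ 2) z2 :=
      hmax2.isLocalMax (Icc_mem_nhds hz12 hz23)
    have h0 := hloc.hasDerivAt_eq_zero (hc_deriv2 x z2)
    have := hL z2 h0
    rw [hz2'] at this
    exact lt_irrefl 0 this
  · push_neg at hcase
    have hw1 : w ≠ z1 := by
      intro h; rw [h, hz1'] at hcase; exact lt_irrefl 0 hcase
    have hw3 : w ≠ z3 := by
      intro h; rw [h, hz3'] at hcase; exact lt_irrefl 0 hcase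
    have hwIoo : w ∈ Set.Ioo z1 z3 :=
      ⟨lt_of_le_of_ne hw.1 (Ne.symm hw1), lt_of_le_of_ne hw.2 hw3⟩
    have hloc : IsLocalMax (fun y : ℝ => 5 * x * y ^ 4 + 2 * x ^ 2 * y - x ^ 4 - 6 * y ^ 2) w :=
      hwmax.isLocalMax (Icc_mem_nhds hwIoo.1 hwIoo.2)
    have h0 := hloc.hasDerivAt_eq_zero (hc_deriv2 x w)
    have := hL w h0
    linarith

/-- For every real x with 0 < x < 1, p(y) = xy⁵ + x + x²y² − x⁴y − 2y³ has exactly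
three distinct real roots. -/
theorem hc_three_real_roots (x : ℝ) (hx0 : 0 < x) (hx1 : x < 1) :
    ∃ a b c : ℝ, a ≠ b ∧ a ≠ c ∧ b ≠ c ∧
      (x * a ^ 5 + x + x ^ 2 * a ^ 2 - x ^ 4 * a - 2 * a ^ 3 = 0) ∧
      (x * b ^ 5 + x + x ^ 2 * b ^ 2 - x ^ 4 * b - 2 * b ^ 3 = 0) ∧
      (x * c ^ 5 + x + x ^ 2 * c ^ 2 - x ^ 4 * c - 2 * c ^ 3 = 0) ∧
      ∀ y : ℝ, x * y ^ 5 + x + x ^ 2 * y ^ 2 - x ^ 4 * y - 2 * y ^ 3 = 0 →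
        y = a ∨ y = b ∨ y = c := by
  have hFc : Continuous (fun y : ℝ => x * y ^ 5 + x + x ^ 2 * y ^ 2 - x ^ 4 * y - 2 * y ^ 3) := by
    fun_prop
  have hx4 : 0 < x ^ 4 := pow_pos hx0 4
  have hx2 : x ^ 2 < 1 := by nlinarith
  have hx3 : x ^ 3 < 1 := by nlinarith [mul_pos hx0 hx0]
  have hx5 : x ^ 5 < 1 := by nlinarith [mul_pos hx0 hx0, pow_pos hx0 3]
  have hx7 : x ^ 7 < 1 := by nlinarith [pow_pos hx0 5, pow_pos hx0 2, mul_pos (pow_pos hx0 5) (pow_pos hx0 2)]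
  have hx4' : x ^ 4 < 1 := by nlinarith [mul_pos hx0 hx0]
  have hu : -2 / x < 0 := div_neg_of_neg_of_pos (by norm_num) hx0
  have hv : (1 : ℝ) < 2 / x := by rw [lt_div_iff₀ hx0]; linarith
  -- sign values
  have hFu : x * (-2 / x) ^ 5 + x + x ^ 2 * (-2 / x) ^ 2 - x ^ 4 * (-2 / x) - 2 * (-2 / x) ^ 3
      < 0 := by
    have h : (x * (-2 / x) ^ 5 + x + x ^ 2 * (-2 / x) ^ 2 - x ^ 4 * (-2 / x) - 2 * (-2 / x) ^ 3)
        * x ^ 4 = -32 + x ^ 5 + 4 * x ^ 4 + 2 * x ^ 7 + 16 * x := by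
      field_simp
      ring
    nlinarith
  have hF0 : (0 : ℝ) < x * (0:ℝ) ^ 5 + x + x ^ 2 * (0:ℝ) ^ 2 - x ^ 4 * 0 - 2 * (0:ℝ) ^ 3 := by
    norm_num; exact hx0
  have hF1 : x * (1:ℝ) ^ 5 + x + x ^ 2 * (1:ℝ) ^ 2 - x ^ 4 * 1 - 2 * (1:ℝ) ^ 3 < 0 := by
    nlinarith [mul_pos (sub_pos.mpr hx1) (show (0:ℝ) < 2 - x ^ 2 - x ^ 3 by nlinarith)]
  have hFv : (0:ℝ) < x * (2 / x) ^ 5 + x + x ^ 2 * (2 / x) ^ 2 - x ^ 4 * (2 / x)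
      - 2 * (2 / x) ^ 3 := by
    have h : (x * (2 / x) ^ 5 + x + x ^ 2 * (2 / x) ^ 2 - x ^ 4 * (2 / x) - 2 * (2 / x) ^ 3)
        * x ^ 4 = 32 + x ^ 5 + 4 * x ^ 4 - 2 * x ^ 7 - 16 * x := by
      field_simp
      ring
    nlinarith
  -- three roots via IVT
  obtain ⟨a, haI, haF⟩ := intermediate_value_Ioo (le_of_lt hu) hFc.continuousOn
    (Set.mem_Ioo.mpr ⟨hFu, hF0⟩)
  obtain ⟨b, hbI, hbF⟩ := intermediate_value_Ioo' (by norm_num : (0:ℝ) ≤ 1) hFc.continuousOn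
    (Set.mem_Ioo.mpr ⟨hF1, hF0⟩)
  obtain ⟨c, hcI, hcF⟩ := intermediate_value_Ioo (le_of_lt hv) hFc.continuousOn
    (Set.mem_Ioo.mpr ⟨hF1, hFv⟩)
  have ea : x * a ^ 5 + x + x ^ 2 * a ^ 2 - x ^ 4 * a - 2 * a ^ 3 = 0 := haF
  have eb : x * b ^ 5 + x + x ^ 2 * b ^ 2 - x ^ 4 * b - 2 * b ^ 3 = 0 := hbF
  have ec : x * c ^ 5 + x + x ^ 2 * c ^ 2 - x ^ 4 * c - 2 * c ^ 3 = 0 := hcF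
  have hab : a < b := lt_trans haI.2 hbI.1
  have hbc : b < c := lt_trans hbI.2 hcI.1
  refine ⟨a, b, c, ne_of_lt hab, ne_of_lt (lt_trans hab hbc), ne_of_lt hbc, ea, eb, ec, ?_⟩
  intro y hy
  by_contra hcon
  push_neg at hcon
  obtain ⟨hya, hyb, hyc⟩ := hcon
  rcases lt_trichotomy y a with h | h | h
  · exact hc_key x hx0 y a b c h hab hbc hy ea eb ec
  · exact hya h
  · rcases lt_trichotomy y b with h' | h' | h'
    · exact hc_key x hx0 a y b c h h' hbc ea hy eb ec
    · exact hyb h'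
    · rcases lt_trichotomy y c with h'' | h'' | h'' 
      · exact hc_key x hx0 a b y c hab h' h'' ea eb hy ec
      · exact hyc h''
      · exact hc_key x hx0 a b c y hab hbc h'' ea eb ec hy
end
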